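/- Let q ≥ 1 and let v_± ∈ C¹([0,T] × ℝ₊) satisfy (∂_t ± ∂_r)v_± = -a·2^{-p} r^{1-p} |v_- + v_+|^{p-1}(v_- + v_+) on {r > 0} with v_-(t,0) + v_+(t,0) = 0, where a > 0, p > 1. Then the pointwise inequality ∂_t(|v_-|^q + |v_+|^q) - ∂_r(|v_-|^q - |v_+|^q) ≤ 0 holds on {r > 0}. -/

import Mathlib

open Real Set

lemma my_hasDerivAt_abs_rpow (q : ℝ) (y : ℝ) (hy : y ≠ 0) :
    HasDerivAt (fun z : ℝ => |z| ^ q) (Real.sign y * (q * |y| ^ (q - 1))) y := by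
  rcases hy.lt_or_gt with h | h
  · have hev : ∀ᶠ z in nhds y, |z| ^ q = (-z) ^ q := by
      filter_upwards [eventually_lt_nhds h] with z hz
      rw [abs_of_neg hz]
    have hd : HasDerivAt (fun z : ℝ => (-z) ^ q) (q * (-y) ^ (q - 1) * (-1)) y :=
      (Real.hasDerivAt_rpow_const (Or.inl (by linarith : (-y : ℝ) ≠ 0))).comp y
        (hasDerivAt_neg y)
    have := hd.congr_of_eventuallyEq hev
    refine this.congr_deriv ?_
    rw [Real.sign_of_neg h, abs_of_neg h]; ring
  · have hev : ∀ᶠ z in nhds y, |z| ^ q = z ^ q := by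
      filter_upwards [eventually_gt_nhds h] with z hz
      rw [abs_of_pos hz]
    have hd : HasDerivAt (fun z : ℝ => z ^ q) (q * y ^ (q - 1)) y :=
      Real.hasDerivAt_rpow_const (Or.inl (ne_of_gt h))
    have := hd.congr_of_eventuallyEq hev
    refine this.congr_deriv ?_
    rw [Real.sign_of_pos h, abs_of_pos h]; ring

lemma sign_abs_mono (q : ℝ) (hq : 1 ≤ q) :
    Monotone (fun v : ℝ => Real.sign v * |v| ^ (q - 1)) := by
  intro u v huv
  have hq' : (0:ℝ) ≤ q - 1 := by linarith
  rcases lt_trichotomy u 0 with hu | hu | hu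
  · rcases lt_trichotomy v 0 with hv | hv | hv
    · simp only [Real.sign_of_neg hu, Real.sign_of_neg hv, abs_of_neg hu, abs_of_neg hv]
      have : (-v) ^ (q-1) ≤ (-u) ^ (q-1) :=
        Real.rpow_le_rpow (by linarith) (by linarith) hq'
      nlinarith
    · simp [hv, Real.sign_of_neg hu]
      positivity
    · have h1 : Real.sign u * |u| ^ (q-1) ≤ 0 := by
        rw [Real.sign_of_neg hu]; nlinarith [Real.rpow_nonneg (abs_nonneg u) (q-1)]
      have h2 : (0:ℝ) ≤ Real.sign v * |v| ^ (q-1) := by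
        rw [Real.sign_of_pos hv]; positivity
      dsimp only; linarith
  · subst hu
    rcases eq_or_lt_of_le huv with h | h
    · simp [← h]
    · simp only [Real.sign_zero, zero_mul, Real.sign_of_pos h]
      positivity
  · have hv : 0 < v := lt_of_lt_of_le hu huv
    simp only [Real.sign_of_pos hu, Real.sign_of_pos hv, abs_of_pos hu, abs_of_pos hv,
      one_mul]
    exact Real.rpow_le_rpow (le_of_lt hu) huv hq'

lemma my_odd (q : ℝ) (z : ℝ) :
    Real.sign (-z) * |(-z)| ^ (q - 1) = -(Real.sign z * |z| ^ (q - 1)) := by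
  rw [Real.sign_neg, abs_neg]; ring

set_option maxHeartbeats 1000000 in
/-- Dissipative energy inequality: if `(∂_t ∓ ∂_r) v_± = -a 2^{-p} r^{1-p} |v₋+v₊|^{p-1}(v₋+v₊)`
with `a > 0` and `v₋(t,0) + v₊(t,0) = 0`, then pointwise on `{r > 0}`
`∂_t(|v₋|^q + |v₊|^q) - ∂_r(|v₋|^q - |v₊|^q) ≤ 0`. -/
theorem stmt_13 (q p a : ℝ) (hq : 1 ≤ q) (hp : 1 < p) (ha : 0 < a) (T : ℝ)
    (vm vp : ℝ × ℝ → ℝ)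
    (hvm : Differentiable ℝ vm) (hvp : Differentiable ℝ vp)
    (hE : Differentiable ℝ (fun x : ℝ × ℝ => |vm x| ^ q + |vp x| ^ q))
    (hF : Differentiable ℝ (fun x : ℝ × ℝ => |vm x| ^ q - |vp x| ^ q))
    (heqm : ∀ t ∈ Set.Icc 0 T, ∀ r : ℝ, 0 < r →
      fderiv ℝ vm (t, r) (1, -1) =
        -a * 2 ^ (-p) * r ^ (1 - p) *
          |vm (t, r) + vp (t, r)| ^ (p - 1) * (vm (t, r) + vp (t, r)))
    (heqp : ∀ t ∈ Set.Icc 0 T, ∀ r : ℝ, 0 < r →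
      fderiv ℝ vp (t, r) (1, 1) =
        -a * 2 ^ (-p) * r ^ (1 - p) *
          |vm (t, r) + vp (t, r)| ^ (p - 1) * (vm (t, r) + vp (t, r)))
    (hbc : ∀ t ∈ Set.Icc 0 T, vm (t, 0) + vp (t, 0) = 0) :
    ∀ t ∈ Set.Icc 0 T, ∀ r : ℝ, 0 < r →
      fderiv ℝ (fun x : ℝ × ℝ => |vm x| ^ q + |vp x| ^ q) (t, r) (1, 0) -
        fderiv ℝ (fun x : ℝ × ℝ => |vm x| ^ q - |vp x| ^ q) (t, r) (0, 1) ≤ 0 := by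
  intro t ht r hr
  set x₀ : ℝ × ℝ := (t, r) with hx₀
  -- differentiability of the separate pieces
  have hg : Differentiable ℝ (fun x : ℝ × ℝ => |vm x| ^ q) := by
    have h2 : (fun x : ℝ × ℝ => ((|vm x| ^ q + |vp x| ^ q) + (|vm x| ^ q - |vp x| ^ q)) * (2:ℝ)⁻¹)
        = fun x : ℝ × ℝ => |vm x| ^ q := by funext x; ring
    rw [← h2]; exact (hE.add hF).mul_const _
  have hh : Differentiable ℝ (fun x : ℝ × ℝ => |vp x| ^ q) := by
    have h2 : (fun x : ℝ × ℝ => ((|vm x| ^ q + |vp x| ^ q) - (|vm x| ^ q - |vp x| ^ q)) * (2:ℝ)⁻¹)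
        = fun x : ℝ × ℝ => |vp x| ^ q := by funext x; ring
    rw [← h2]; exact (hE.sub hF).mul_const _
  -- chain rule / local min for each piece
  have key : ∀ (v : ℝ × ℝ → ℝ), Differentiable ℝ v →
      Differentiable ℝ (fun x => |v x| ^ q) → ∀ w : ℝ × ℝ,
      fderiv ℝ (fun x => |v x| ^ q) x₀ w
        = (Real.sign (v x₀) * |v x₀| ^ (q - 1)) * (q * fderiv ℝ v x₀ w) := by
    intro v hv hvd w
    by_cases hz : v x₀ = 0
    · have hmin : IsLocalMin (fun x => |v x| ^ q) x₀ := by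
        apply Filter.Eventually.of_forall
        intro y
        simp only [hz, abs_zero]
        rw [Real.zero_rpow (by linarith : q ≠ 0)]
        positivity
      rw [hmin.fderiv_eq_zero]
      simp [hz]
    · have hder := (my_hasDerivAt_abs_rpow q (v x₀) hz).comp_hasFDerivAt x₀ (hv x₀).hasFDerivAt
      have h3 : fderiv ℝ (fun x => |v x| ^ q) x₀
          = (Real.sign (v x₀) * (q * |v x₀| ^ (q - 1))) • fderiv ℝ v x₀ := hder.fderiv
      rw [h3]
      simp only [ContinuousLinearMap.coe_smul', Pi.smul_apply, smul_eq_mul]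
      ring
  -- rewrite the goal using linearity
  have hEeq : fderiv ℝ (fun x : ℝ × ℝ => |vm x| ^ q + |vp x| ^ q) x₀
      = fderiv ℝ (fun x => |vm x| ^ q) x₀ + fderiv ℝ (fun x => |vp x| ^ q) x₀ :=
    fderiv_add (hg x₀) (hh x₀)
  have hFeq : fderiv ℝ (fun x : ℝ × ℝ => |vm x| ^ q - |vp x| ^ q) x₀
      = fderiv ℝ (fun x => |vm x| ^ q) x₀ - fderiv ℝ (fun x => |vp x| ^ q) x₀ :=
    fderiv_sub (hg x₀) (hh x₀)
  rw [hEeq, hFeq]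
  simp only [ContinuousLinearMap.add_apply, ContinuousLinearMap.sub_apply]
  have hmm : ((1, 0) : ℝ × ℝ) - (0, 1) = (1, -1) := by simp [Prod.ext_iff]
  have hpp : ((1, 0) : ℝ × ℝ) + (0, 1) = (1, 1) := by simp [Prod.ext_iff]
  have hGm : fderiv ℝ (fun x => |vm x| ^ q) x₀ (1, 0)
      - fderiv ℝ (fun x => |vm x| ^ q) x₀ (0, 1)
      = fderiv ℝ (fun x => |vm x| ^ q) x₀ (1, -1) := by
    rw [← map_sub, hmm]
  have hGp : fderiv ℝ (fun x => |vp x| ^ q) x₀ (1, 0)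
      + fderiv ℝ (fun x => |vp x| ^ q) x₀ (0, 1)
      = fderiv ℝ (fun x => |vp x| ^ q) x₀ (1, 1) := by
    rw [← map_add, hpp]
  have goal_eq : fderiv ℝ (fun x => |vm x| ^ q) x₀ (1, 0) + fderiv ℝ (fun x => |vp x| ^ q) x₀ (1, 0)
      - (fderiv ℝ (fun x => |vm x| ^ q) x₀ (0, 1) - fderiv ℝ (fun x => |vp x| ^ q) x₀ (0, 1))
      = fderiv ℝ (fun x => |vm x| ^ q) x₀ (1, -1) + fderiv ℝ (fun x => |vp x| ^ q) x₀ (1, 1) := by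
    rw [← hGm, ← hGp]; ring
  rw [goal_eq, key vm hvm hg (1, -1), key vp hvp hh (1, 1)]
  rw [show fderiv ℝ vm x₀ (1, -1) = fderiv ℝ vm (t, r) (1, -1) from rfl,
    show fderiv ℝ vp x₀ (1, 1) = fderiv ℝ vp (t, r) (1, 1) from rfl,
    heqm t ht r hr, heqp t ht r hr]
  -- now pure algebra / sign argument
  set s : ℝ := vm (t, r) + vp (t, r) with hs
  set K : ℝ := a * 2 ^ (-p) * r ^ (1 - p) * |s| ^ (p - 1) with hK
  have hK0 : 0 ≤ K := by
    have h1 : (0:ℝ) < 2 ^ (-p) := Real.rpow_pos_of_pos (by norm_num) _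
    have h2 : (0:ℝ) < r ^ (1 - p) := Real.rpow_pos_of_pos hr _
    have h3 : (0:ℝ) ≤ |s| ^ (p - 1) := Real.rpow_nonneg (abs_nonneg s) _
    positivity
  have hceq : -a * 2 ^ (-p) * r ^ (1 - p) * |s| ^ (p - 1) * s = -K * s := by
    rw [hK]; ring
  rw [hceq]
  set fm : ℝ := Real.sign (vm (t, r)) * |vm (t, r)| ^ (q - 1) with hfm
  set fp : ℝ := Real.sign (vp (t, r)) * |vp (t, r)| ^ (q - 1) with hfp
  have hmono := sign_abs_mono q hq
  have hprod : 0 ≤ s * (fm + fp) := by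
    rcases le_total 0 s with hs0 | hs0
    · have h1 : -vp (t, r) ≤ vm (t, r) := by rw [hs] at hs0; linarith
      have h2 := hmono h1
      simp only [Real.sign_neg, abs_neg, neg_mul] at h2
      have : 0 ≤ fm + fp := by rw [hfm, hfp]; linarith
      exact mul_nonneg hs0 this
    · have h1 : vm (t, r) ≤ -vp (t, r) := by rw [hs] at hs0; linarith
      have h2 := hmono h1
      simp only [Real.sign_neg, abs_neg, neg_mul] at h2
      have h4 : fm + fp ≤ 0 := by rw [hfm, hfp]; linarith
      nlinarith [mul_nonneg (neg_nonneg.mpr hs0) (neg_nonneg.mpr h4)]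
  have hq0 : (0:ℝ) ≤ q := by linarith
  nlinarith [mul_nonneg (mul_nonneg hq0 hK0) hprod]
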